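/- Expansion of the flow polynomial as a weighted sum of chromatic polynomials of contractions: Let G = (V, E, ε) be a finite multigraph with an orientation (s, t), let q be a positive integer, and let H be any finite abelian group of cardinality q. Then, as an identity in ℚ, χ*(G; q) = (−1)^{|E|} · q^{−|V|} · ∑_{F ⊆ E} (1 − q)^{|F|} · χ(G/F; q), where χ*(G; q) is the number of nowhere-zero H-flows of G and χ(G/F; q) is the number of proper q-colorings of the contraction G/F. -/

import Mathlib

open Finset

/-- The number of nowhere-zero `H`-flows of the multigraph with edge set `S` and
orientation given by source and target maps `s t : E → V`. -/
noncomputable def nzFlowCount {V E : Type*} [Fintype V] [Fintype E] [DecidableEq V]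
    (s t : E → V) (S : Finset E) (H : Type*) [AddCommGroup H] [Fintype H] : ℕ :=
  Nat.card {φ : {e : E // e ∈ S} → H //
    (∀ x : V, (∑ e : {e : E // e ∈ S}, if s e.1 = x then φ e else 0) =
              (∑ e : {e : E // e ∈ S}, if t e.1 = x then φ e else 0)) ∧
    ∀ e, φ e ≠ 0}

/-- The number of proper `q`-colorings of the contraction `G/F` of the multigraph given
by `ε : E → Sym2 V`: maps `ω : V → Fin q` constant on each connected component of the
spanning subgraph `(V, F)` with `ω x ≠ ω y` for every edge `e ∈ E ∖ F` with endpoints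
`x, y`. -/
noncomputable def contractionColoringCount {V E : Type*} (ε : E → Sym2 V) (F : Finset E)
    (q : ℕ) : ℕ :=
  Nat.card {ω : V → Fin q //
    (∀ x y : V, (SimpleGraph.fromEdgeSet (ε '' (F : Set E))).Reachable x y → ω x = ω y) ∧
    ∀ e ∉ F, ∀ x y : V, ε e = s(x, y) → ω x ≠ ω y}

set_option linter.unusedSectionVars false
set_option maxHeartbeats 1000000
namespace FlowExp


/-- Generic inclusion-exclusion. -/
lemma incl_excl {α ι : Type*} [Finite α] [DecidableEq ι] (S : Finset ι) (P : ι → α → Prop) :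
    (Nat.card {a : α // ∀ i ∈ S, ¬ P i a} : ℚ)
      = ∑ B ∈ S.powerset, (-1 : ℚ) ^ B.card * (Nat.card {a : α // ∀ i ∈ B, P i a} : ℚ) := by
  classical
  cases nonempty_fintype α
  have hcard : ∀ (p : α → Prop), (Nat.card {a : α // p a} : ℚ)
      = ∑ a : α, if p a then (1:ℚ) else 0 := by
    intro p
    rw [Nat.card_eq_fintype_card, Fintype.card_subtype, Finset.sum_boole]
  have h1 : ∀ B ∈ S.powerset, (-1 : ℚ) ^ B.card * (Nat.card {a : α // ∀ i ∈ B, P i a} : ℚ)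
      = ∑ a : α, if (∀ i ∈ B, P i a) then (-1:ℚ)^B.card else 0 := by
    intro B _
    rw [hcard, Finset.mul_sum]
    exact Finset.sum_congr rfl fun a _ => by split <;> ring
  rw [Finset.sum_congr rfl h1, Finset.sum_comm, hcard]
  refine Finset.sum_congr rfl fun a _ => ?_
  have h2 : S.powerset.filter (fun B => ∀ i ∈ B, P i a)
      = (S.filter (fun i => P i a)).powerset := by
    ext B
    rw [Finset.mem_filter, Finset.mem_powerset, Finset.mem_powerset]
    constructor
    · rintro ⟨hBS, hP⟩ x hx
      rw [Finset.mem_filter]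
      exact ⟨hBS hx, hP _ hx⟩
    · intro h
      refine ⟨fun x hx => (Finset.mem_filter.1 (h hx)).1,
        fun i hi => (Finset.mem_filter.1 (h hi)).2⟩
  rw [← Finset.sum_filter, h2]
  have h3 := Finset.sum_powerset_neg_one_pow_card (x := S.filter (fun i => P i a))
  have h4 : (∑ m ∈ (S.filter fun i => P i a).powerset, (-1:ℚ)^m.card)
      = if (S.filter fun i => P i a) = ∅ then 1 else 0 := by
    exact_mod_cast congrArg (fun z : ℤ => (z : ℚ)) h3
  rw [h4]
  congr 1
  simp [Finset.filter_eq_empty_iff]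

lemma sum_powerset_pow (x : ℚ) {E : Type*} [DecidableEq E] (A : Finset E) :
    ∑ F ∈ A.powerset, x ^ F.card = (x + 1) ^ A.card := by
  classical
  induction A using Finset.induction_on with
  | empty => simp
  | @insert a A' ha ih =>
    rw [Finset.sum_powerset_insert ha, ih, Finset.card_insert_of_notMem ha]
    have : ∀ F ∈ A'.powerset, x ^ (insert a F).card = x * x ^ F.card := by
      intro F hF
      rw [Finset.card_insert_of_notMem (fun h => ha (Finset.mem_powerset.1 hF h)), pow_succ]
      ring
    rw [Finset.sum_congr rfl this, ← Finset.mul_sum, ih]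
    ring

lemma reach_const {V α : Type*} {G : SimpleGraph V} (ω : V → α)
    (h : ∀ x y, G.Adj x y → ω x = ω y) {x y : V} (hr : G.Reachable x y) : ω x = ω y := by
  obtain ⟨w⟩ := hr
  induction w with
  | nil => rfl
  | cons a _ ih => exact (h _ _ a).trans ih



section
variable {V E : Type*} [Fintype V] [Fintype E] [DecidableEq V] [DecidableEq E]
variable (ε : E → Sym2 V) (s t : E → V)

abbrev Gr (A : Finset E) : SimpleGraph V := SimpleGraph.fromEdgeSet (ε '' (A : Set E))

noncomputable def cnum (A : Finset E) : ℕ := Nat.card (Gr ε A).ConnectedComponent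

noncomputable def rep {A : Finset E} (cc : (Gr ε A).ConnectedComponent) : V :=
  Quot.out cc

lemma mk_rep {A : Finset E} (cc : (Gr ε A).ConnectedComponent) :
    (Gr ε A).connectedComponentMk (rep ε cc) = cc := Quot.out_eq cc

lemma mk_s_t (hst : ∀ e, ε e = s(s e, t e)) {A : Finset E} {e : E} (he : e ∈ A) :
    (Gr ε A).connectedComponentMk (s e) = (Gr ε A).connectedComponentMk (t e) := by
  by_cases h : s e = t e
  · rw [h]
  · refine SimpleGraph.ConnectedComponent.sound ?_
    refine SimpleGraph.Adj.reachable ?_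
    rw [SimpleGraph.fromEdgeSet_adj]
    exact ⟨⟨e, by simpa using he, hst e⟩, h⟩


/-- Number of colorings constant on components is `q ^ cnum`. -/
lemma card_respects (A : Finset E) (q : ℕ) :
    Nat.card {ω : V → Fin q // ∀ x y : V, (Gr ε A).Reachable x y → ω x = ω y}
      = q ^ cnum ε A := by
  have eqv : {ω : V → Fin q // ∀ x y : V, (Gr ε A).Reachable x y → ω x = ω y}
      ≃ ((Gr ε A).ConnectedComponent → Fin q) := by
    refine ⟨fun ω => SimpleGraph.ConnectedComponent.lift ω.1
        (fun v w p _ => ω.2 v w p.reachable),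
      fun f => ⟨fun x => f ((Gr ε A).connectedComponentMk x),
        fun x y h => by
          show f ((Gr ε A).connectedComponentMk x) = f ((Gr ε A).connectedComponentMk y)
          rw [SimpleGraph.ConnectedComponent.sound h]⟩, ?_, ?_⟩
    · intro ω; ext x; rfl
    · intro f; ext cc
      induction cc using SimpleGraph.ConnectedComponent.ind
      rfl
  rw [Nat.card_congr eqv, Nat.card_fun, Nat.card_eq_fintype_card (α := Fin q),
    Fintype.card_fin]
  rfl

variable (H : Type*) [AddCommGroup H] [Fintype H]

open scoped Classical in
def bdry (A : Finset E) : ({e : E // e ∈ A} → H) →+ (V → H) :=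
  AddMonoidHom.mk' (fun φ => ∑ e : {e : E // e ∈ A},
      (Pi.single (s e.1) (φ e) - Pi.single (t e.1) (φ e)))
    (fun φ ψ => by
      rw [← Finset.sum_add_distrib]
      refine Finset.sum_congr rfl fun e _ => ?_
      simp only [Pi.add_apply, Pi.single_add]
      abel)

open scoped Classical in
noncomputable def theta (A : Finset E) : (V → H) →+ ((Gr ε A).ConnectedComponent → H) :=
  AddMonoidHom.mk' (fun ψ cc =>
      ∑ x ∈ univ.filter (fun x => (Gr ε A).connectedComponentMk x = cc), ψ x)
    (fun ψ ψ' => by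
      funext cc
      exact Finset.sum_add_distrib)

open scoped Classical in
lemma theta_single (A : Finset E) (a : V) (h : H) (cc : (Gr ε A).ConnectedComponent) :
    theta ε H A (Pi.single a h) cc
      = if (Gr ε A).connectedComponentMk a = cc then h else 0 := by
  show (∑ x ∈ univ.filter (fun x => (Gr ε A).connectedComponentMk x = cc),
      Pi.single a h x) = _
  simp only [Pi.single_apply]
  rw [Finset.sum_ite_eq' (univ.filter _) a (fun _ => h)]
  simp [Finset.mem_filter]

lemma theta_bdry (hst : ∀ e, ε e = s(s e, t e)) (A : Finset E)
    (φ : {e : E // e ∈ A} → H) :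
    theta ε H A (bdry s t H A φ) = 0 := by
  show theta ε H A (∑ e : {e : E // e ∈ A},
      (Pi.single (s e.1) (φ e) - Pi.single (t e.1) (φ e))) = 0
  rw [map_sum]
  refine Finset.sum_eq_zero fun e _ => ?_
  rw [map_sub]
  funext cc
  simp only [Pi.sub_apply, Pi.zero_apply, theta_single]
  rw [mk_s_t ε s t hst e.2]
  simp

lemma single_sub_mem (hst : ∀ e, ε e = s(s e, t e)) {A : Finset E} {x y : V}
    (hxy : (Gr ε A).Adj x y) (h : H) :
    Pi.single x h - Pi.single y h ∈ (bdry s t H A).range := by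
  rw [SimpleGraph.fromEdgeSet_adj] at hxy
  obtain ⟨⟨e, heA, he⟩, hne⟩ := hxy
  rw [hst e] at he
  have heA' : e ∈ A := by simpa using heA
  have key : ∀ (u : {e : E // e ∈ A}) (hv : H),
      Pi.single (s u.1) hv - Pi.single (t u.1) hv ∈ (bdry s t H A).range := by
    intro u hv
    set φ0 : {e : E // e ∈ A} → H := Pi.single u hv with hφ0
    refine ⟨φ0, ?_⟩
    show (∑ e' : {e : E // e ∈ A},
        ((Pi.single (s e'.1) (φ0 e') : V → H) - Pi.single (t e'.1) (φ0 e'))) = _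
    rw [Fintype.sum_eq_single u]
    · rw [hφ0, Pi.single_eq_same]
    · intro b hb
      rw [hφ0, Pi.single_eq_of_ne hb]
      simp
  rcases Sym2.eq_iff.1 he with ⟨h1, h2⟩ | ⟨h1, h2⟩
  · have := key ⟨e, heA'⟩ h
    rwa [h1, h2] at this
  · have := key ⟨e, heA'⟩ h
    rw [h1, h2] at this
    rw [show (Pi.single x h : V → H) - Pi.single y h = -(Pi.single y h - Pi.single x h) by abel]
    exact neg_mem this

lemma reach_single_sub_mem (hst : ∀ e, ε e = s(s e, t e)) {A : Finset E} {x y : V}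
    (hr : (Gr ε A).Reachable x y) (h : H) :
    Pi.single x h - Pi.single y h ∈ (bdry s t H A).range := by
  obtain ⟨w⟩ := hr
  induction w with
  | nil =>
    rw [sub_self]
    exact zero_mem _
  | @cons u v z a p ih =>
    have h1 := single_sub_mem ε s t H hst a h
    rw [show (Pi.single u h : V → H) - Pi.single z h
        = (Pi.single u h - Pi.single v h) + (Pi.single v h - Pi.single z h) by abel]
    exact add_mem h1 ih

lemma single_finset_sum (a : V) {ι : Type*} (sfin : Finset ι) (f : ι → H) :
    (Pi.single a (∑ x ∈ sfin, f x) : V → H) = ∑ x ∈ sfin, Pi.single a (f x) := by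
  have := map_sum (AddMonoidHom.single (fun _ : V => H) a) f sfin
  simp only [AddMonoidHom.single_apply] at this
  exact this

open scoped Classical in
lemma ker_theta_le (hst : ∀ e, ε e = s(s e, t e)) (A : Finset E) :
    (theta ε H A).ker ≤ (bdry s t H A).range := by
  intro ψ hψ
  rw [AddMonoidHom.mem_ker] at hψ
  letI : Fintype ((Gr ε A).ConnectedComponent) := Fintype.ofFinite _
  have hzero : (∑ x : V, (Pi.single (rep ε ((Gr ε A).connectedComponentMk x)) (ψ x) : V → H)) = 0 := by
    rw [← Finset.sum_fiberwise univ (fun x => (Gr ε A).connectedComponentMk x)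
      (fun x => (Pi.single (rep ε ((Gr ε A).connectedComponentMk x)) (ψ x) : V → H))]
    refine Finset.sum_eq_zero fun cc _ => ?_
    have h1 : ∀ x ∈ univ.filter (fun x => (Gr ε A).connectedComponentMk x = cc),
        (Pi.single (rep ε ((Gr ε A).connectedComponentMk x)) (ψ x) : V → H)
          = Pi.single (rep ε cc) (ψ x) := by
      intro x hx
      rw [(Finset.mem_filter.1 hx).2]
    rw [Finset.sum_congr rfl h1, ← single_finset_sum]
    have h2 : (∑ x ∈ univ.filter (fun x => (Gr ε A).connectedComponentMk x = cc), ψ x)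
        = theta ε H A ψ cc := rfl
    rw [h2, hψ]
    simp
  have hrep : ψ = ∑ x : V,
      (Pi.single x (ψ x) - Pi.single (rep ε ((Gr ε A).connectedComponentMk x)) (ψ x)) := by
    rw [Finset.sum_sub_distrib, Finset.univ_sum_single, hzero, sub_zero]
  rw [hrep]
  refine sum_mem fun x _ => ?_
  refine reach_single_sub_mem ε s t H hst ?_ (ψ x)
  exact (SimpleGraph.ConnectedComponent.exact (mk_rep ε ((Gr ε A).connectedComponentMk x))).symm

open scoped Classical in
lemma theta_surj (A : Finset E) : Function.Surjective (theta ε H A) := by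
  letI : Fintype ((Gr ε A).ConnectedComponent) := Fintype.ofFinite _
  intro f
  refine ⟨∑ cc, Pi.single (rep ε cc) (f cc), ?_⟩
  rw [map_sum]
  funext cc'
  rw [Finset.sum_apply]
  have h1 : ∀ cc, theta ε H A (Pi.single (rep ε cc) (f cc)) cc'
      = if cc = cc' then f cc else 0 := by
    intro cc
    rw [theta_single, mk_rep]
  rw [Finset.sum_congr rfl (fun cc _ => h1 cc)]
  exact Fintype.sum_ite_eq' cc' f

lemma range_eq_ker (hst : ∀ e, ε e = s(s e, t e)) (A : Finset E) :
    (bdry s t H A).range = (theta ε H A).ker := by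
  refine le_antisymm ?_ (ker_theta_le ε s t H hst A)
  rintro _ ⟨φ, rfl⟩
  rw [AddMonoidHom.mem_ker]
  exact theta_bdry ε s t H hst A φ

lemma kirch_iff (A : Finset E) (φ : {e : E // e ∈ A} → H) :
    (∀ x : V, (∑ e : {e : E // e ∈ A}, if s e.1 = x then φ e else 0)
        = (∑ e : {e : E // e ∈ A}, if t e.1 = x then φ e else 0))
      ↔ bdry s t H A φ = 0 := by
  have hb : bdry s t H A φ = ∑ e : {e : E // e ∈ A},
      ((Pi.single (s e.1) (φ e) : V → H) - Pi.single (t e.1) (φ e)) := rfl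
  rw [hb, funext_iff]
  refine forall_congr' fun x => ?_
  rw [Finset.sum_apply]
  simp only [Pi.sub_apply, Pi.single_apply, Pi.zero_apply]
  rw [Finset.sum_sub_distrib, sub_eq_zero]
  have hs : ∀ (g : {e : E // e ∈ A} → V),
      (∑ e : {e : E // e ∈ A}, if x = g e then φ e else 0)
        = ∑ e : {e : E // e ∈ A}, if g e = x then φ e else 0 :=
    fun g => Finset.sum_congr rfl fun e _ => if_congr eq_comm rfl rfl
  rw [hs (fun e => s e.1), hs (fun e => t e.1)]

lemma card_flows_mul (hst : ∀ e, ε e = s(s e, t e)) (A : Finset E) :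
    Nat.card {φ : {e : E // e ∈ A} → H //
        ∀ x : V, (∑ e : {e : E // e ∈ A}, if s e.1 = x then φ e else 0)
          = (∑ e : {e : E // e ∈ A}, if t e.1 = x then φ e else 0)}
        * (Fintype.card H) ^ (Fintype.card V)
      = (Fintype.card H) ^ A.card * (Fintype.card H) ^ (cnum ε A) := by
  classical
  have hker : Nat.card {φ : {e : E // e ∈ A} → H //
      ∀ x : V, (∑ e : {e : E // e ∈ A}, if s e.1 = x then φ e else 0)
        = (∑ e : {e : E // e ∈ A}, if t e.1 = x then φ e else 0)}
      = Nat.card (bdry s t H A).ker := by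
    refine Nat.card_congr (Equiv.subtypeEquivRight fun φ => ?_)
    exact (kirch_iff s t H A φ).trans (AddMonoidHom.mem_ker).symm
  have h1 : (Fintype.card H) ^ A.card
      = Nat.card (bdry s t H A).range * Nat.card (bdry s t H A).ker := by
    have := AddSubgroup.card_eq_card_quotient_mul_card_addSubgroup (bdry s t H A).ker
    rw [Nat.card_congr (QuotientAddGroup.quotientKerEquivRange (bdry s t H A)).toEquiv] at this
    rw [← this, Nat.card_fun]
    simp [Nat.card_eq_fintype_card]
  have h2 : (Fintype.card H) ^ (Fintype.card V)
      = (Fintype.card H) ^ (cnum ε A) * Nat.card (bdry s t H A).range := by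
    have := AddSubgroup.card_eq_card_quotient_mul_card_addSubgroup (theta ε H A).ker
    rw [Nat.card_congr (QuotientAddGroup.quotientKerEquivRange (theta ε H A)).toEquiv] at this
    have hr : (theta ε H A).range = ⊤ :=
      AddMonoidHom.range_eq_top.2 (theta_surj ε H A)
    rw [hr, ← range_eq_ker ε s t H hst A] at this
    have htop : Nat.card ((⊤ : AddSubgroup ((Gr ε A).ConnectedComponent → H)))
        = (Fintype.card H) ^ (cnum ε A) := by
      rw [Nat.card_congr AddSubgroup.topEquiv.toEquiv, Nat.card_fun]
      simp [Nat.card_eq_fintype_card, cnum]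
    rw [htop] at this
    rw [← this, Nat.card_fun]
    simp [Nat.card_eq_fintype_card]
  rw [hker, h2, h1]
  ring

end

section
variable {V E : Type*} [Fintype V] [Fintype E] [DecidableEq V] [DecidableEq E]
variable (ε : E → Sym2 V) (s t : E → V)

lemma swap_sum (g : Finset E → Finset E → ℚ) :
    ∑ F ∈ (univ : Finset E).powerset, ∑ D ∈ ((univ : Finset E) \ F).powerset, g F D
      = ∑ A ∈ (univ : Finset E).powerset, ∑ F ∈ A.powerset, g F (A \ F) := by
  rw [Finset.sum_sigma', Finset.sum_sigma']
  refine Finset.sum_nbij' (fun p => ⟨p.1 ∪ p.2, p.1⟩) (fun p => ⟨p.2, p.1 \ p.2⟩)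
    ?_ ?_ ?_ ?_ ?_
  · rintro ⟨F, D⟩ hp
    rw [Finset.mem_sigma] at hp ⊢
    obtain ⟨h1, h2⟩ := hp
    rw [Finset.mem_powerset] at h1 h2 ⊢
    refine ⟨Finset.subset_univ _, ?_⟩
    rw [Finset.mem_powerset]
    exact Finset.subset_union_left
  · rintro ⟨A, F⟩ hp
    rw [Finset.mem_sigma] at hp ⊢
    obtain ⟨h1, h2⟩ := hp
    rw [Finset.mem_powerset] at h1 h2 ⊢
    refine ⟨Finset.subset_univ _, ?_⟩
    rw [Finset.mem_powerset]
    exact Finset.sdiff_subset_sdiff h1 (le_refl F)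
  · rintro ⟨F, D⟩ hp
    rw [Finset.mem_sigma, Finset.mem_powerset, Finset.mem_powerset] at hp
    have hd : Disjoint F D := (Finset.subset_sdiff.1 hp.2).2.symm
    simp only [Sigma.mk.inj_iff]
    exact ⟨trivial, heq_of_eq (Finset.union_sdiff_cancel_left hd)⟩
  · rintro ⟨A, F⟩ hp
    rw [Finset.mem_sigma, Finset.mem_powerset, Finset.mem_powerset] at hp
    simp only [Sigma.mk.inj_iff]
    exact ⟨Finset.union_sdiff_of_subset hp.2, HEq.rfl⟩
  · rintro ⟨F, D⟩ hp
    rw [Finset.mem_sigma, Finset.mem_powerset, Finset.mem_powerset] at hp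
    have hd : Disjoint F D := (Finset.subset_sdiff.1 hp.2).2.symm
    simp only []
    rw [Finset.union_sdiff_cancel_left hd]

end

section
variable {V E : Type*} [Fintype V] [Fintype E] [DecidableEq V] [DecidableEq E]
variable (ε : E → Sym2 V) (s t : E → V)

lemma respects_iff (hst : ∀ e, ε e = s(s e, t e)) (F D : Finset E)
    (q : ℕ) (ω : V → Fin q) (hω : ∀ x y : V, (Gr ε F).Reachable x y → ω x = ω y) :
    (∀ e ∈ D, ω (s e) = ω (t e))
      ↔ (∀ x y : V, (Gr ε (F ∪ D)).Reachable x y → ω x = ω y) := by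
  constructor
  · intro h x y hr
    refine reach_const ω ?_ hr
    intro a b hadj
    rw [SimpleGraph.fromEdgeSet_adj] at hadj
    obtain ⟨⟨e, he, hee⟩, hne⟩ := hadj
    have he' : e ∈ F ∪ D := by simpa using he
    rw [hst e] at hee
    rcases Finset.mem_union.1 he' with heF | heD
    · refine hω a b (SimpleGraph.Adj.reachable ?_)
      rw [SimpleGraph.fromEdgeSet_adj]
      exact ⟨⟨e, by simpa using heF, by rw [hst e]; exact hee⟩, hne⟩
    · have hωe := h e heD
      rcases Sym2.eq_iff.1 hee with ⟨h1, h2⟩ | ⟨h1, h2⟩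
      · rw [← h1, ← h2]; exact hωe
      · rw [← h1, ← h2]; exact hωe.symm
  · intro h e heD
    exact h _ _
      (SimpleGraph.ConnectedComponent.exact (mk_s_t ε s t hst (Finset.mem_union_right F heD)))

open scoped Classical in
lemma coloring_expand (hst : ∀ e, ε e = s(s e, t e)) (F : Finset E) (q : ℕ) :
    (contractionColoringCount ε F q : ℚ)
      = ∑ D ∈ ((univ : Finset E) \ F).powerset,
          (-1 : ℚ) ^ D.card * (q : ℚ) ^ (cnum ε (F ∪ D)) := by
  have h0 : contractionColoringCount ε F q
      = Nat.card {a : {ω : V → Fin q // ∀ x y : V, (Gr ε F).Reachable x y → ω x = ω y} //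
          ∀ e ∈ (univ : Finset E) \ F, ¬ (a.1 (s e) = a.1 (t e))} := by
    show Nat.card _ = _
    refine Nat.card_congr (Equiv.symm ?_)
    refine (Equiv.subtypeSubtypeEquivSubtypeInter
        (fun ω : V → Fin q => ∀ x y : V, (Gr ε F).Reachable x y → ω x = ω y)
        (fun ω => ∀ e ∈ (univ : Finset E) \ F, ¬ (ω (s e) = ω (t e)))).trans
      (Equiv.subtypeEquivRight ?_)
    intro ω
    refine and_congr_right fun hresp => ?_
    constructor
    · intro h e heF x y hxy hEq
      rw [hst e] at hxy
      have hne := h e (Finset.mem_sdiff.2 ⟨Finset.mem_univ e, heF⟩)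
      rcases Sym2.eq_iff.1 hxy with ⟨h1, h2⟩ | ⟨h1, h2⟩
      · exact hne (by rw [h1, h2]; exact hEq)
      · exact hne (by rw [h1, h2]; exact hEq.symm)
    · intro h e he hEq
      have he' : e ∉ F := (Finset.mem_sdiff.1 he).2
      exact h e he' (s e) (t e) (hst e) hEq
  rw [h0, incl_excl ((univ : Finset E) \ F)
    (fun e (a : {ω : V → Fin q // ∀ x y : V, (Gr ε F).Reachable x y → ω x = ω y}) =>
      a.1 (s e) = a.1 (t e))]
  refine Finset.sum_congr rfl fun D hD => ?_
  congr 1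
  rw [Finset.mem_powerset] at hD
  have hcc : Nat.card {a : {ω : V → Fin q // ∀ x y : V, (Gr ε F).Reachable x y → ω x = ω y} //
      ∀ e ∈ D, a.1 (s e) = a.1 (t e)}
      = Nat.card {ω : V → Fin q // ∀ x y : V, (Gr ε (F ∪ D)).Reachable x y → ω x = ω y} := by
    refine Nat.card_congr ((Equiv.subtypeSubtypeEquivSubtypeInter
        (fun ω : V → Fin q => ∀ x y : V, (Gr ε F).Reachable x y → ω x = ω y)
        (fun ω => ∀ e ∈ D, ω (s e) = ω (t e))).trans
      (Equiv.subtypeEquivRight fun ω => ?_))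
    constructor
    · rintro ⟨hresp, h⟩
      exact (respects_iff ε s t hst F D q ω hresp).1 h
    · intro h
      have hresp : ∀ x y : V, (Gr ε F).Reachable x y → ω x = ω y := by
        intro x y hr
        refine h x y (hr.mono (SimpleGraph.fromEdgeSet_mono ?_))
        exact Set.image_mono (Finset.coe_subset.2 Finset.subset_union_left)
      exact ⟨hresp, (respects_iff ε s t hst F D q ω hresp).2 h⟩
  rw [hcc, card_respects ε (F ∪ D) q]
  push_cast
  rfl

lemma sum_restrict (B : Finset E) {H : Type*} [AddCommGroup H] (ψ : E → H)
    (h0 : ∀ e ∈ B, ψ e = 0) (g : E → V) (x : V) :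
    (∑ e : {e : E // e ∈ (univ : Finset E)}, if g e.1 = x then ψ e.1 else 0)
      = ∑ e : {e : E // e ∈ Bᶜ}, if g e.1 = x then ψ e.1 else 0 := by
  rw [Finset.sum_coe_sort (univ : Finset E) (fun e => if g e = x then ψ e else 0),
      Finset.sum_coe_sort Bᶜ (fun e => if g e = x then ψ e else 0),
      ← Finset.sum_compl_add_sum B (fun e => if g e = x then ψ e else 0)]
  have hz : (∑ e ∈ B, if g e = x then ψ e else 0) = 0 :=
    Finset.sum_eq_zero fun e he => by rw [h0 e he, ite_self]
  rw [hz, add_zero]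

lemma card_flows_restrict (H : Type*) [AddCommGroup H] [Fintype H] (B : Finset E) :
    Nat.card {φ : {e : E // e ∈ (univ : Finset E)} → H //
        (∀ x : V, (∑ e : {e : E // e ∈ (univ : Finset E)}, if s e.1 = x then φ e else 0)
            = ∑ e : {e : E // e ∈ (univ : Finset E)}, if t e.1 = x then φ e else 0)
          ∧ ∀ e ∈ B, φ ⟨e, Finset.mem_univ e⟩ = 0}
      = Nat.card {φ : {e : E // e ∈ Bᶜ} → H //
          ∀ x : V, (∑ e : {e : E // e ∈ Bᶜ}, if s e.1 = x then φ e else 0)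
            = ∑ e : {e : E // e ∈ Bᶜ}, if t e.1 = x then φ e else 0} := by
  refine Nat.card_congr ?_
  refine ⟨fun φ => ⟨fun e => φ.1 ⟨e.1, Finset.mem_univ e.1⟩, ?_⟩,
      fun φ => ⟨fun e => if h : e.1 ∈ Bᶜ then φ.1 ⟨e.1, h⟩ else 0, ?_, ?_⟩, ?_, ?_⟩
  · intro x
    have h1 := sum_restrict B (fun e => φ.1 ⟨e, Finset.mem_univ e⟩)
      (fun e he => φ.2.2 e he) s x
    have h2 := sum_restrict B (fun e => φ.1 ⟨e, Finset.mem_univ e⟩)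
      (fun e he => φ.2.2 e he) t x
    have hK := φ.2.1 x
    exact h1.symm.trans (hK.trans h2)
  · intro x
    have hψ0 : ∀ e ∈ B, (if h : e ∈ Bᶜ then φ.1 ⟨e, h⟩ else 0) = 0 :=
      fun e he => dif_neg (fun hc => (Finset.mem_compl.1 hc) he)
    have h1 := sum_restrict B (fun e => if h : e ∈ Bᶜ then φ.1 ⟨e, h⟩ else 0) hψ0 s x
    have h2 := sum_restrict B (fun e => if h : e ∈ Bᶜ then φ.1 ⟨e, h⟩ else 0) hψ0 t x
    have hc : ∀ (g' : E → V),
        (∑ e : {e : E // e ∈ Bᶜ}, if g' e.1 = x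
            then (if h : e.1 ∈ Bᶜ then φ.1 ⟨e.1, h⟩ else 0) else 0)
          = ∑ e : {e : E // e ∈ Bᶜ}, if g' e.1 = x then φ.1 e else 0 := by
      intro g'
      refine Finset.sum_congr rfl fun e _ => ?_
      have hd : (if h : e.1 ∈ Bᶜ then φ.1 ⟨e.1, h⟩ else 0) = φ.1 e := dif_pos e.2
      rw [hd]
    exact h1.trans ((hc s).trans ((φ.2 x).trans ((hc t).symm.trans h2.symm)))
  · intro e heB
    exact dif_neg (fun hc => (Finset.mem_compl.1 hc) heB)
  · intro φ
    apply Subtype.ext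
    funext e
    show (if h : e.1 ∈ Bᶜ then φ.1 ⟨e.1, Finset.mem_univ e.1⟩ else 0) = φ.1 e
    by_cases h : e.1 ∈ Bᶜ
    · rw [dif_pos h]
    · rw [dif_neg h]
      have heB : e.1 ∈ B := by simpa [Finset.mem_compl] using h
      exact (φ.2.2 e.1 heB).symm
  · intro φ
    apply Subtype.ext
    funext e
    show (if h : e.1 ∈ Bᶜ then φ.1 ⟨e.1, h⟩ else 0) = φ.1 e
    rw [dif_pos e.2]

end

end FlowExp

open FlowExp in
/-- The flow polynomial as a weighted sum of chromatic polynomials of contractions: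
`χ*(G;q) = (-1)^{|E|} q^{-|V|} ∑_{F ⊆ E} (1-q)^{|F|} χ(G/F;q)`, where `(s,t)` is an
orientation of `G` and `H` is any finite abelian group of cardinality `q`. -/
theorem flow_expansion_chromatics {V E : Type*} [Fintype V] [Fintype E]
    [DecidableEq V] [DecidableEq E]
    (ε : E → Sym2 V) (s t : E → V) (hst : ∀ e, ε e = s(s e, t e))
    (q : ℕ) (hq : 0 < q) (H : Type*) [AddCommGroup H] [Fintype H]
    (hH : Fintype.card H = q) :
    (nzFlowCount s t Finset.univ H : ℚ) =
      (-1) ^ (Fintype.card E) * (q : ℚ) ^ (-(Fintype.card V : ℤ)) *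
        ∑ F ∈ Finset.univ.powerset,
          (1 - (q : ℚ)) ^ F.card * (contractionColoringCount ε F q : ℚ) := by
  classical
  have hq0 : (q : ℚ) ≠ 0 := Nat.cast_ne_zero.2 hq.ne'
  -- Right-hand side: expand each chromatic count and reorganize
  have hcol : ∀ F ∈ (univ : Finset E).powerset,
      (1 - (q:ℚ)) ^ F.card * (contractionColoringCount ε F q : ℚ)
        = ∑ D ∈ ((univ : Finset E) \ F).powerset,
            (1 - (q:ℚ)) ^ F.card * ((-1:ℚ) ^ D.card * (q:ℚ) ^ (cnum ε (F ∪ D))) := by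
    intro F _
    rw [coloring_expand ε s t hst F q, Finset.mul_sum]
  rw [Finset.sum_congr rfl hcol, swap_sum
      (fun F D => (1 - (q:ℚ)) ^ F.card * ((-1:ℚ) ^ D.card * (q:ℚ) ^ (cnum ε (F ∪ D))))]
  have hin : ∀ A ∈ (univ : Finset E).powerset,
      (∑ F ∈ A.powerset,
          (1 - (q:ℚ)) ^ F.card * ((-1:ℚ) ^ ((A \ F).card) * (q:ℚ) ^ (cnum ε (F ∪ (A \ F)))))
        = (-1:ℚ) ^ A.card * (q:ℚ) ^ A.card * (q:ℚ) ^ (cnum ε A) := by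
    intro A _
    have hterm : ∀ F ∈ A.powerset,
        (1 - (q:ℚ)) ^ F.card * ((-1:ℚ) ^ ((A \ F).card) * (q:ℚ) ^ (cnum ε (F ∪ (A \ F))))
          = (-1:ℚ) ^ A.card * (q:ℚ) ^ (cnum ε A) * ((q:ℚ) - 1) ^ F.card := by
      intro F hF
      rw [Finset.mem_powerset] at hF
      rw [Finset.union_sdiff_of_subset hF, Finset.card_sdiff_of_subset hF]
      rw [show (1 - (q:ℚ)) = (-1) * ((q:ℚ) - 1) by ring, mul_pow]
      have h2 : (-1:ℚ) ^ F.card * (-1:ℚ) ^ (A.card - F.card) = (-1:ℚ) ^ A.card := by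
        rw [← pow_add, Nat.add_sub_cancel' (Finset.card_le_card hF)]
      calc (-1:ℚ) ^ F.card * ((q:ℚ) - 1) ^ F.card
            * ((-1:ℚ) ^ (A.card - F.card) * (q:ℚ) ^ (cnum ε A))
          = ((-1:ℚ) ^ F.card * (-1:ℚ) ^ (A.card - F.card)) * (q:ℚ) ^ (cnum ε A)
            * ((q:ℚ) - 1) ^ F.card := by ring
        _ = _ := by rw [h2]
    rw [Finset.sum_congr rfl hterm, ← Finset.mul_sum, sum_powerset_pow, sub_add_cancel]
    ring
  rw [Finset.sum_congr rfl hin]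
  -- Left-hand side: inclusion-exclusion over the edges forced to be zero
  have hnz : (nzFlowCount s t (univ : Finset E) H : ℚ)
      = (Nat.card {a : {φ : {e : E // e ∈ (univ : Finset E)} → H //
          ∀ x : V, (∑ e : {e : E // e ∈ (univ : Finset E)}, if s e.1 = x then φ e else 0)
            = ∑ e : {e : E // e ∈ (univ : Finset E)}, if t e.1 = x then φ e else 0} //
          ∀ e ∈ (univ : Finset E), ¬ (a.1 ⟨e, Finset.mem_univ e⟩ = 0)} : ℚ) := by
    show ((Nat.card _ : ℕ) : ℚ) = _
    congr 1
    refine Nat.card_congr (Equiv.symm ((Equiv.subtypeSubtypeEquivSubtypeInter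
        (fun φ : {e : E // e ∈ (univ : Finset E)} → H =>
          ∀ x : V, (∑ e : {e : E // e ∈ (univ : Finset E)}, if s e.1 = x then φ e else 0)
            = ∑ e : {e : E // e ∈ (univ : Finset E)}, if t e.1 = x then φ e else 0)
        (fun φ => ∀ e ∈ (univ : Finset E), ¬ (φ ⟨e, Finset.mem_univ e⟩ = 0))).trans
      (Equiv.subtypeEquivRight fun φ => ?_)))
    refine and_congr_right fun _ => ?_
    constructor
    · exact fun h e => h e.1 (Finset.mem_univ e.1)
    · exact fun h e _ => h ⟨e, Finset.mem_univ e⟩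
  rw [hnz, incl_excl (univ : Finset E)
    (fun e (a : {φ : {e : E // e ∈ (univ : Finset E)} → H //
        ∀ x : V, (∑ e : {e : E // e ∈ (univ : Finset E)}, if s e.1 = x then φ e else 0)
          = ∑ e : {e : E // e ∈ (univ : Finset E)}, if t e.1 = x then φ e else 0}) =>
      a.1 ⟨e, Finset.mem_univ e⟩ = 0)]
  have hNB : ∀ B : Finset E,
      (Nat.card {a : {φ : {e : E // e ∈ (univ : Finset E)} → H //
          ∀ x : V, (∑ e : {e : E // e ∈ (univ : Finset E)}, if s e.1 = x then φ e else 0)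
            = ∑ e : {e : E // e ∈ (univ : Finset E)}, if t e.1 = x then φ e else 0} //
          ∀ e ∈ B, a.1 ⟨e, Finset.mem_univ e⟩ = 0} : ℚ)
        = (q:ℚ) ^ (Bᶜ.card) * (q:ℚ) ^ (cnum ε Bᶜ) / (q:ℚ) ^ (Fintype.card V) := by
    intro B
    have e1 : Nat.card {a : {φ : {e : E // e ∈ (univ : Finset E)} → H //
          ∀ x : V, (∑ e : {e : E // e ∈ (univ : Finset E)}, if s e.1 = x then φ e else 0)
            = ∑ e : {e : E // e ∈ (univ : Finset E)}, if t e.1 = x then φ e else 0} //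
          ∀ e ∈ B, a.1 ⟨e, Finset.mem_univ e⟩ = 0}
        = Nat.card {φ : {e : E // e ∈ Bᶜ} → H //
            ∀ x : V, (∑ e : {e : E // e ∈ Bᶜ}, if s e.1 = x then φ e else 0)
              = ∑ e : {e : E // e ∈ Bᶜ}, if t e.1 = x then φ e else 0} :=
      (Nat.card_congr (Equiv.subtypeSubtypeEquivSubtypeInter _ _)).trans
        (card_flows_restrict s t H B)
    rw [e1, eq_div_iff (pow_ne_zero _ hq0)]
    have h3 := card_flows_mul ε s t H hst Bᶜ
    rw [hH] at h3
    exact_mod_cast h3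
  rw [Finset.sum_congr rfl (fun B _ => by rw [hNB B])]
  -- Reindex by complementation and match terms
  rw [zpow_neg, zpow_natCast, Finset.mul_sum,
    Finset.powerset_univ]
  refine Fintype.sum_bijective compl (Function.Involutive.bijective (fun A => compl_compl A))
    _ _ (fun B => ?_)
  have h5 : (-1:ℚ) ^ (Fintype.card E) = (-1:ℚ) ^ B.card * (-1:ℚ) ^ (Bᶜ.card) := by
    rw [← pow_add, Finset.card_add_card_compl]
  have h6 : (-1:ℚ) ^ (Bᶜ.card) * (-1:ℚ) ^ (Bᶜ.card) = 1 := by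
    rw [← pow_add]
    exact Even.neg_one_pow ⟨Bᶜ.card, rfl⟩
  have hsign : (-1:ℚ) ^ B.card = (-1:ℚ) ^ (Fintype.card E) * (-1:ℚ) ^ (Bᶜ.card) := by
    rw [h5, mul_assoc, h6, mul_one]
  rw [hsign]
  ring
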